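/- Let X be a commutative unital normed quasi-algebra with Hausdorff metric h. Then the inversion map x ↦ x⁻¹ is a homeomorphism of G(X) onto itself with respect to the topology induced by h; concretely, it is a bijection of G(X) equal to its own inverse, and for every x ∈ G(X) and ε > 0 there exists δ > 0 such that for all y ∈ G(X), h(x, y) < δ implies h(x⁻¹, y⁻¹) < ε. -/
import Mathlib


/-- A quasi-algebra in the sense of Aseev/Dehghanizade–Modarres: a partially
ordered set with addition, zero, real scalar multiplication and a product. -/
structure QuasiAlgebra (X : Type*) [PartialOrder X] where
  add : X → X → X
  zero : X
  smul : ℝ → X → X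
  mul : X → X → X
  add_comm : ∀ x y, add x y = add y x
  add_assoc : ∀ x y z, add x (add y z) = add (add x y) z
  add_zero : ∀ x, add x zero = x
  smul_smul : ∀ (α β : ℝ) (x : X), smul α (smul β x) = smul (α * β) x
  smul_add : ∀ (α : ℝ) (x y : X), smul α (add x y) = add (smul α x) (smul α y)
  one_smul : ∀ x, smul 1 x = x
  zero_smul : ∀ x, smul 0 x = zero
  add_smul_le : ∀ (α β : ℝ) (x : X), smul (α + β) x ≤ add (smul α x) (smul β x)
  add_le_add : ∀ {x y z v : X}, x ≤ y → z ≤ v → add x z ≤ add y v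
  smul_le_smul : ∀ (α : ℝ) {x y : X}, x ≤ y → smul α x ≤ smul α y
  mul_assoc : ∀ x y z, mul x (mul y z) = mul (mul x y) z
  smul_mul : ∀ (α : ℝ) (x y : X), smul α (mul x y) = mul (smul α x) y
  mul_smul : ∀ (α : ℝ) (x y : X), smul α (mul x y) = mul x (smul α y)
  zero_mul_zero : mul zero zero = zero
  mul_add_le : ∀ x y z, mul x (add y z) ≤ add (mul x y) (mul x z)
  add_mul_le : ∀ x y z, mul (add x y) z ≤ add (mul x z) (mul y z)
  mul_le_mul : ∀ {x y z v : X}, x ≤ y → z ≤ v → mul x z ≤ mul y v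

namespace QuasiAlgebra

variable {X : Type*} [PartialOrder X]

/-- `-x = (-1)·x`. -/
def neg (Q : QuasiAlgebra X) (x : X) : X := Q.smul (-1) x

/-- `x - y = x + (-y)`. -/
def sub (Q : QuasiAlgebra X) (x y : X) : X := Q.add x (Q.neg y)

/-- An element is regular if it has an additive inverse. -/
def Regular (Q : QuasiAlgebra X) (x : X) : Prop := ∃ x' : X, Q.add x x' = Q.zero

/-- A norm on a quasi-algebra. -/
structure Norm (Q : QuasiAlgebra X) where
  norm : X → ℝ
  norm_pos : ∀ {x : X}, x ≠ Q.zero → 0 < norm x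
  norm_add : ∀ x y, norm (Q.add x y) ≤ norm x + norm y
  norm_smul : ∀ (α : ℝ) (x : X), norm (Q.smul α x) = |α| * norm x
  norm_mul : ∀ x y, norm (Q.mul x y) ≤ norm x * norm y
  norm_mono : ∀ {x y : X}, x ≤ y → norm x ≤ norm y
  le_of_forall_eps : ∀ {x y : X},
    (∀ ε : ℝ, 0 < ε → ∃ z : X, x ≤ Q.add y z ∧ norm z ≤ ε) → x ≤ y

/-- The Hausdorff metric of a normed quasi-algebra. -/
noncomputable def hmet (Q : QuasiAlgebra X) (N : Q.Norm) (x y : X) : ℝ :=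
  sInf {r : ℝ | 0 ≤ r ∧ ∃ a₁ a₂ : X,
    x ≤ Q.add y a₁ ∧ y ≤ Q.add x a₂ ∧ N.norm a₁ ≤ r ∧ N.norm a₂ ≤ r}

end QuasiAlgebra

/-- in a commutative unital normed quasi-algebra, inversion is a
self-inverse bijection of the group of units `G(X)` which is continuous for the
Hausdorff metric; hence a homeomorphism of `G(X)` onto itself. -/
theorem stmt_16 {X : Type*} [PartialOrder X] (Q : QuasiAlgebra X) (N : Q.Norm)
    (hcomm : ∀ x y : X, Q.mul x y = Q.mul y x)
    (one : X) (hone : ∀ x : X, Q.mul one x = x ∧ Q.mul x one = x)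
    (hnorm1 : N.norm one = 1)
    (inv : X → X)
    (hinv : ∀ x : X, (∃ xi : X, Q.mul x xi = one ∧ Q.mul xi x = one) →
      Q.mul x (inv x) = one ∧ Q.mul (inv x) x = one) :
    Set.BijOn inv {x : X | ∃ xi : X, Q.mul x xi = one ∧ Q.mul xi x = one}
      {x : X | ∃ xi : X, Q.mul x xi = one ∧ Q.mul xi x = one} ∧
    (∀ x ∈ {x : X | ∃ xi : X, Q.mul x xi = one ∧ Q.mul xi x = one},
      inv (inv x) = x) ∧
    (∀ x ∈ {x : X | ∃ xi : X, Q.mul x xi = one ∧ Q.mul xi x = one},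
      ∀ ε : ℝ, 0 < ε → ∃ δ : ℝ, 0 < δ ∧
        ∀ y ∈ {x : X | ∃ xi : X, Q.mul x xi = one ∧ Q.mul xi x = one},
          Q.hmet N x y < δ → Q.hmet N (inv x) (inv y) < ε) := by
  -- notation
  set G : Set X := {x : X | ∃ xi : X, Q.mul x xi = one ∧ Q.mul xi x = one} with hGdef
  -- basic norm facts
  have norm_zero : N.norm Q.zero = 0 := by
    have h0 : Q.smul 0 Q.zero = Q.zero := Q.zero_smul _
    have h1 := N.norm_smul 0 Q.zero
    rw [h0] at h1; simpa using h1
  have norm_nn : ∀ z : X, 0 ≤ N.norm z := by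
    intro z
    by_cases hz : z = Q.zero
    · rw [hz, norm_zero]
    · exact (N.norm_pos hz).le
  have mul_zero : ∀ z : X, Q.mul z Q.zero = Q.zero := by
    intro z
    have h0 := Q.mul_smul 0 z Q.zero
    rw [Q.zero_smul, Q.zero_smul] at h0
    exact h0.symm
  have one_ne_zero : one ≠ Q.zero := by
    intro h
    rw [h, norm_zero] at hnorm1
    norm_num at hnorm1
  -- uniqueness of inverses
  have uniq : ∀ x a b : X, Q.mul x a = one → Q.mul b x = one → a = b := by
    intro x a b ha hb
    calc a = Q.mul one a := ((hone a).1).symm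
      _ = Q.mul (Q.mul b x) a := by rw [hb]
      _ = Q.mul b (Q.mul x a) := (Q.mul_assoc b x a).symm
      _ = Q.mul b one := by rw [ha]
      _ = b := (hone b).2
  have invmem : ∀ x : X, x ∈ G → inv x ∈ G := by
    intro x hx
    obtain ⟨h1, h2⟩ := hinv x hx
    exact ⟨x, h2, h1⟩
  have invinv : ∀ x ∈ G, inv (inv x) = x := by
    intro x hx
    obtain ⟨h1, h2⟩ := hinv x hx
    obtain ⟨h3, h4⟩ := hinv (inv x) ⟨x, h2, h1⟩
    exact uniq (inv x) (inv (inv x)) x h3 h1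
  -- product with a sum monotonicity
  have mul_le_add : ∀ c p q a : X, p ≤ Q.add q a →
      Q.mul c p ≤ Q.add (Q.mul c q) (Q.mul c a) := by
    intro c p q a h
    exact le_trans (Q.mul_le_mul (le_refl c) h) (Q.mul_add_le c q a)
  refine ⟨⟨invmem, ?_, ?_⟩, invinv, ?_⟩
  · -- injective on G
    intro a ha b hb hab
    rw [← invinv a ha, ← invinv b hb, hab]
  · -- surjective onto G
    intro z hz
    exact ⟨inv z, invmem z hz, invinv z hz⟩
  · -- continuity of inversion
    intro x hx ε hε
    obtain ⟨hx1, hx2⟩ := hinv x hx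
    have hxizero : inv x ≠ Q.zero := by
      intro h
      apply one_ne_zero
      rw [← hx1, h, mul_zero]
    set M : ℝ := N.norm (inv x) with hM
    have hMpos : 0 < M := N.norm_pos hxizero
    refine ⟨min (1 / (2 * M)) (ε / (2 * M ^ 2)), by positivity, ?_⟩
    intro y hy hmxy
    obtain ⟨hy1, hy2⟩ := hinv y hy
    set xi := inv x with hxi
    set yi := inv y with hyi
    set S : Set ℝ := {r : ℝ | 0 ≤ r ∧ ∃ a₁ a₂ : X,
      x ≤ Q.add y a₁ ∧ y ≤ Q.add x a₂ ∧ N.norm a₁ ≤ r ∧ N.norm a₂ ≤ r} with hSdef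
    set S' : Set ℝ := {r : ℝ | 0 ≤ r ∧ ∃ a₁ a₂ : X,
      xi ≤ Q.add yi a₁ ∧ yi ≤ Q.add xi a₂ ∧ N.norm a₁ ≤ r ∧ N.norm a₂ ≤ r} with hS'def
    have hmet_xy : Q.hmet N x y = sInf S := rfl
    have hmet' : Q.hmet N xi yi = sInf S' := rfl
    rw [hmet']
    rcases Set.eq_empty_or_nonempty S with hSe | hSne
    · -- S empty forces S' empty
      have hS'e : S' = ∅ := by
        rw [Set.eq_empty_iff_forall_notMem]
        intro r hr
        obtain ⟨hr0, b₁, b₂, hb1, hb2, hn1, hn2⟩ := hr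
        have hc1 : Q.mul (Q.mul x y) xi = y := by
          rw [hcomm x y, ← Q.mul_assoc, hx1, (hone y).2]
        have hc2 : Q.mul (Q.mul x y) yi = x := by
          rw [← Q.mul_assoc, hy1, (hone x).2]
        have k1 := mul_le_add (Q.mul x y) xi yi b₁ hb1
        rw [hc1, hc2] at k1
        have k2 := mul_le_add (Q.mul x y) yi xi b₂ hb2
        rw [hc1, hc2] at k2
        have hmem : max (N.norm (Q.mul (Q.mul x y) b₂)) (N.norm (Q.mul (Q.mul x y) b₁)) ∈ S := by
          refine ⟨le_trans (norm_nn _) (le_max_left _ _), Q.mul (Q.mul x y) b₂,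
            Q.mul (Q.mul x y) b₁, k2, k1, le_max_left _ _, le_max_right _ _⟩
        rw [hSe] at hmem
        exact hmem
      rw [hS'e, Real.sInf_empty]
      exact hε
    · -- S nonempty: extract good witnesses
      rw [hmet_xy] at hmxy
      obtain ⟨r, hrS, hrlt⟩ := exists_lt_of_csInf_lt hSne hmxy
      obtain ⟨hr0, a₁, a₂, ha1, ha2, hn1, hn2⟩ := hrS
      have hr1 : r < 1 / (2 * M) := lt_of_lt_of_le hrlt (min_le_left _ _)
      have hr2 : r < ε / (2 * M ^ 2) := lt_of_lt_of_le hrlt (min_le_right _ _)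
      have hd1 : Q.mul (Q.mul xi yi) x = yi := by
        rw [hcomm xi yi, ← Q.mul_assoc, hx2, (hone yi).2]
      have hd2 : Q.mul (Q.mul xi yi) y = xi := by
        rw [← Q.mul_assoc, hy2, (hone xi).2]
      have k1 := mul_le_add (Q.mul xi yi) x y a₁ ha1
      rw [hd1, hd2] at k1
      have k2 := mul_le_add (Q.mul xi yi) y x a₂ ha2
      rw [hd1, hd2] at k2
      -- bound the norm of yi
      set K : ℝ := N.norm yi with hK
      have hKnn : 0 ≤ K := norm_nn _
      have hcb : ∀ a : X, N.norm (Q.mul (Q.mul xi yi) a) ≤ M * K * N.norm a := by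
        intro a
        calc N.norm (Q.mul (Q.mul xi yi) a) ≤ N.norm (Q.mul xi yi) * N.norm a :=
              N.norm_mul _ a
          _ ≤ (N.norm xi * N.norm yi) * N.norm a :=
              mul_le_mul_of_nonneg_right (N.norm_mul xi yi) (norm_nn a)
          _ = M * K * N.norm a := rfl
      have hKb : K ≤ 2 * M := by
        have e1 : K ≤ M + M * K * N.norm a₁ := by
          calc K ≤ N.norm (Q.add xi (Q.mul (Q.mul xi yi) a₁)) := N.norm_mono k1
            _ ≤ M + N.norm (Q.mul (Q.mul xi yi) a₁) := N.norm_add _ _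
            _ ≤ M + M * K * N.norm a₁ := by linarith [hcb a₁]
        have e2 : N.norm a₁ ≤ r := hn1
        have e3 : 0 ≤ N.norm a₁ := norm_nn a₁
        have e4 : M * r < 1 / 2 := by
          have h5 := (lt_div_iff₀ (by positivity : (0:ℝ) < 2 * M)).mp hr1
          nlinarith
        have e5 : M * N.norm a₁ ≤ M * r := mul_le_mul_of_nonneg_left e2 hMpos.le
        nlinarith [mul_le_mul_of_nonneg_left e5 hKnn, mul_le_mul_of_nonneg_left e4.le hKnn]
      set ρ : ℝ := 2 * M ^ 2 * r with hρ
      have hρS' : ρ ∈ S' := by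
        refine ⟨by positivity, Q.mul (Q.mul xi yi) a₂, Q.mul (Q.mul xi yi) a₁, k2, k1, ?_, ?_⟩
        · calc N.norm (Q.mul (Q.mul xi yi) a₂) ≤ M * K * N.norm a₂ := hcb a₂
            _ ≤ M * K * r := mul_le_mul_of_nonneg_left hn2 (mul_nonneg hMpos.le hKnn)
            _ ≤ M * (2 * M) * r :=
                mul_le_mul_of_nonneg_right (mul_le_mul_of_nonneg_left hKb hMpos.le) hr0
            _ = 2 * M ^ 2 * r := by ring
        · calc N.norm (Q.mul (Q.mul xi yi) a₁) ≤ M * K * N.norm a₁ := hcb a₁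
            _ ≤ M * K * r := mul_le_mul_of_nonneg_left hn1 (mul_nonneg hMpos.le hKnn)
            _ ≤ M * (2 * M) * r :=
                mul_le_mul_of_nonneg_right (mul_le_mul_of_nonneg_left hKb hMpos.le) hr0
            _ = 2 * M ^ 2 * r := by ring
      have hbdd : BddBelow S' := ⟨0, fun z hz => hz.1⟩
      have hle : sInf S' ≤ ρ := csInf_le hbdd hρS'
      have hρε : ρ < ε := by
        have h2M : (0:ℝ) < 2 * M ^ 2 := by positivity
        calc ρ = 2 * M ^ 2 * r := rfl
          _ < 2 * M ^ 2 * (ε / (2 * M ^ 2)) := mul_lt_mul_of_pos_left hr2 h2M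
          _ = ε := by field_simp
      exact lt_of_le_of_lt hle hρε
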